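/- arXiv:math/0108191 — 4 statements merged into one kernel-verified Lean document; each statement's English description precedes it below -/
import Mathlib

section
/- Suppose there exist unit vectors $w_1,\ldots,w_n \in \mathbb{C}^{m+1}$ and positive reals $r_1,\ldots,r_n$ with $\sum_{i=1}^n r_i\, w_i \otimes w_i^* = \Lambda \mathbb{I}$ where $\Lambda = \frac{1}{m+1}\sum_{i=1}^n r_i$. Then for each $i$, $m\, r_i \leq \sum_{j \neq i} r_j$ (the strong triangle inequalities of weight $m$). -/
open Matrix

theorem stmt1 {m n : ℕ} (r : Fin n → ℝ) (hr : ∀ i, 0 < r i)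
    (w : Fin n → Fin (m+1) → ℂ) (hw : ∀ i, star (w i) ⬝ᵥ w i = 1)
    (Λ : ℝ) (hΛ : Λ = (∑ i, r i) / (m + 1))
    (hclosed : ∑ i, (r i : ℂ) • Matrix.vecMulVec (w i) (star (w i)) =
      (Λ : ℂ) • (1 : Matrix (Fin (m+1)) (Fin (m+1)) ℂ)) :
    ∀ i, (m : ℝ) * r i ≤ ∑ j ∈ Finset.univ.erase i, r j := by
  intro i
  have h := congrArg (fun X => star (w i) ⬝ᵥ (X *ᵥ w i)) hclosed
  simp only [Matrix.mulVec, Matrix.vecMulVec_apply, dotProduct, Matrix.one_apply,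
    Matrix.smul_apply, Matrix.sum_apply, smul_eq_mul, Finset.sum_mul, Finset.mul_sum] at h
  have key : ∑ j, (r j : ℂ) * ((star (w i) ⬝ᵥ w j) * (star (w j) ⬝ᵥ w i)) = (Λ : ℂ) := by
    have hR : ∑ x : Fin (m + 1), ∑ i_1 : Fin (m + 1),
        star (w i) x * ((↑Λ * if x = i_1 then 1 else 0) * w i i_1) = (Λ : ℂ) := by
      simp only [mul_ite, mul_one, mul_zero, ite_mul, zero_mul, Finset.sum_ite_eq,
        Finset.mem_univ, if_true]
      have : ∑ x, star (w i) x * ((Λ:ℂ) * w i x) = (Λ:ℂ) * ∑ x, star (w i) x * w i x := by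
        rw [Finset.mul_sum]; exact Finset.sum_congr rfl fun x _ => by ring
      rw [this, show ∑ x, star (w i) x * w i x = star (w i) ⬝ᵥ w i from rfl, hw i, mul_one]
    have hL : ∑ x : Fin (m + 1), ∑ x_1 : Fin (m + 1), ∑ j : Fin n,
        star (w i) x * ((r j : ℂ) * (w j x * star (w j) x_1) * w i x_1)
        = ∑ j, (r j : ℂ) * ((star (w i) ⬝ᵥ w j) * (star (w j) ⬝ᵥ w i)) := by
      rw [Finset.sum_congr rfl fun x _ => Finset.sum_comm (f := fun x_1 j =>
        star (w i) x * ((r j : ℂ) * (w j x * star (w j) x_1) * w i x_1)), Finset.sum_comm]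
      refine Finset.sum_congr rfl fun j _ => ?_
      rw [dotProduct, dotProduct, Finset.sum_mul_sum, Finset.mul_sum]
      refine Finset.sum_congr rfl fun x _ => ?_
      rw [Finset.mul_sum]
      exact Finset.sum_congr rfl fun y _ => by ring
    rw [← hL, h, hR]
  have key2 : ∑ j, r j * Complex.normSq (star (w j) ⬝ᵥ w i) = Λ := by
    have hcast : ((∑ j, r j * Complex.normSq (star (w j) ⬝ᵥ w i) : ℝ) : ℂ) = ((Λ : ℝ) : ℂ) := by
      rw [← key]
      push_cast
      refine Finset.sum_congr rfl fun j _ => ?_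
      have hconj : star (w i) ⬝ᵥ w j = starRingEnd ℂ (star (w j) ⬝ᵥ w i) := by
        simp only [dotProduct, map_sum, _root_.map_mul, RingHomCompTriple.comp_apply,
          Pi.star_apply, RingHom.id_apply]
        exact Finset.sum_congr rfl fun x _ => by
          simp [mul_comm, Complex.conj_conj, RCLike.star_def]
      rw [hconj, mul_comm (starRingEnd ℂ _), Complex.mul_conj]
    exact_mod_cast hcast
  have hle : r i ≤ Λ := by
    have h1 : r i * Complex.normSq (star (w i) ⬝ᵥ w i) = r i := by
      rw [hw i]; simp
    calc r i = r i * Complex.normSq (star (w i) ⬝ᵥ w i) := h1.symm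
      _ ≤ ∑ j, r j * Complex.normSq (star (w j) ⬝ᵥ w i) := by
          exact Finset.single_le_sum
            (f := fun j => r j * Complex.normSq (star (w j) ⬝ᵥ w i))
            (fun j _ => mul_nonneg (hr j).le (Complex.normSq_nonneg _)) (Finset.mem_univ i)
      _ = Λ := key2
  have hsum : ∑ j ∈ Finset.univ.erase i, r j = (∑ j, r j) - r i := by
    rw [← Finset.add_sum_erase _ _ (Finset.mem_univ i)]; ring
  rw [hsum]
  have hm : (0:ℝ) < (m:ℝ) + 1 := by positivity
  rw [hΛ] at hle
  rw [le_div_iff₀ hm] at hle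
  nlinarith [hle]
end

section
/- Suppose $\mathbf{r} \in W_{I,J,k}$, i.e., $r_1,\ldots,r_n > 0$ satisfy the strong triangle inequalities of weight $m$ and $k\sum_{i\in I} r_i = (m-k+1)\sum_{j\in J} r_j$ for a proper partition $I \cup J$ of $\{1,\ldots,n\}$ and $1 \leq k \leq m$. Then $\mathbf{r}_I = (r_i)_{i\in I}$ satisfies the strong triangle inequalities of weight $m-k$ and $\mathbf{r}_J = (r_j)_{j\in J}$ satisfies the strong triangle inequalities of weight $k-1$; explicitly, $r_i \leq \frac{1}{m-k+1}\sum_{i'\in I} r_{i'}$ for all $i \in I$, and $r_j \leq \frac{1}{k}\sum_{j'\in J} r_{j'}$ for all $j \in J$. -/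
open Finset

theorem stmt3 {m n k : ℕ} (r : Fin n → ℝ) (hr : ∀ i, 0 < r i)
    (hsti : ∀ i, (m : ℝ) * r i ≤ ∑ j ∈ Finset.univ.erase i, r j)
    (I J : Finset (Fin n)) (hIJ : Disjoint I J) (hunion : I ∪ J = Finset.univ)
    (hI : I.Nonempty) (hJ : J.Nonempty)
    (hk1 : 1 ≤ k) (hkm : k ≤ m)
    (hwall : (k : ℝ) * ∑ i ∈ I, r i = ((m : ℝ) - k + 1) * ∑ j ∈ J, r j) :
    (∀ i ∈ I, r i ≤ (∑ i' ∈ I, r i') / ((m : ℝ) - k + 1)) ∧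
      (∀ j ∈ J, r j ≤ (∑ j' ∈ J, r j') / (k : ℝ)) := by
  set ρI := ∑ i ∈ I, r i with hρI
  set ρJ := ∑ j ∈ J, r j with hρJ
  set ρ := ∑ j : Fin n, r j with hρ
  have hsum : ρI + ρJ = ρ := by
    rw [hρI, hρJ, hρ, ← Finset.sum_union hIJ, hunion]
  have hkm' : (k : ℝ) ≤ (m : ℝ) := by exact_mod_cast hkm
  have hk1' : (1 : ℝ) ≤ (k : ℝ) := by exact_mod_cast hk1
  have hmk : (0 : ℝ) < (m : ℝ) - k + 1 := by linarith
  have hkpos : (0 : ℝ) < (k : ℝ) := by linarith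
  have hsti' : ∀ i, ((m : ℝ) + 1) * r i ≤ ρ := by
    intro i
    have h := hsti i
    have h2 : r i + ∑ j ∈ Finset.univ.erase i, r j = ρ :=
      Finset.add_sum_erase _ _ (Finset.mem_univ i)
    linarith
  constructor
  · intro i hi
    rw [le_div_iff₀ hmk]
    have h1 := hsti' i
    -- (m+1) ρI = (m-k+1) ρ
    have h2 : ((m : ℝ) + 1) * ρI = ((m : ℝ) - k + 1) * ρ := by
      rw [← hsum]; ring_nf; linarith [hwall]
    nlinarith [h1, h2]
  · intro j hj
    rw [le_div_iff₀ hkpos]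
    have h1 := hsti' j
    have h2 : ((m : ℝ) + 1) * ρJ = (k : ℝ) * ρ := by
      rw [← hsum]; ring_nf; linarith [hwall]
    nlinarith [h1, h2]
end

section
/- Let $e_1,\ldots,e_n$ be Hermitian matrices, let $I \subseteq J \subseteq \{1,\ldots,n\}$, set $A_I = \sum_{i\in I} e_i$ and $A_J = \sum_{j \in J} e_j$, and let $E$, $F$ be spectral projections of $A_I$ and $A_J$ respectively. Then $\sum_{s \in I} \mathrm{Im\,Tr}\big(e_s\,[\sqrt{-1}E, \sqrt{-1}F]\big) = 0$; equivalently $\mathrm{Im\,Tr}([A_I, E] F) = 0$. (Involutivity of bending Hamiltonians.) -/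
open Matrix

theorem stmt13 {m n : ℕ} (e : Fin n → Matrix (Fin (m+1)) (Fin (m+1)) ℂ)
    (he : ∀ s, (e s).IsHermitian)
    (I J : Finset (Fin n)) (hIJ : I ⊆ J)
    (AI AJ : Matrix (Fin (m+1)) (Fin (m+1)) ℂ)
    (hAI : AI = ∑ s ∈ I, e s) (hAJ : AJ = ∑ s ∈ J, e s)
    (E F : Matrix (Fin (m+1)) (Fin (m+1)) ℂ)
    (hE : E.IsHermitian) (hF : F.IsHermitian)
    (hE2 : E * E = E) (hF2 : F * F = F)
    (hEc : Commute AI E) (hFc : Commute AJ F) :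
    (∑ s ∈ I,
        ((e s * (Complex.I • E * (Complex.I • F) - Complex.I • F * (Complex.I • E))).trace).im)
        = 0 ∧
      (((AI * E - E * AI) * F).trace).im = 0 := by
  have hcomm : AI * E = E * AI := hEc
  constructor
  · set X := Complex.I • E * (Complex.I • F) - Complex.I • F * (Complex.I • E) with hX
    have hsum : ∑ s ∈ I, ((e s * X).trace).im = ((AI * X).trace).im := by
      rw [hAI, Finset.sum_mul, trace_sum, Complex.im_sum]
    rw [hsum]
    have hX' : AI * X = AI * F * E - AI * E * F := by
      rw [hX]
      simp only [smul_mul_smul_comm, Complex.I_mul_I, neg_smul, one_smul]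
      noncomm_ring
    have : (AI * X).trace = 0 := by
      rw [hX', trace_sub]
      have h1 : (AI * F * E).trace = (E * (AI * F)).trace := by
        exact Matrix.trace_mul_comm (AI * F) E
      rw [h1, ← mul_assoc, ← hcomm, mul_assoc, ← mul_assoc, sub_self]
    rw [this]; rfl
  · rw [hcomm, sub_self, zero_mul, trace_zero]; rfl
end

section
/- Let $\mathbf{e}=(e_1,\ldots,e_5)$ be a pentagon in $\mathbb{R}^3$, i.e., vectors with $\sum_{i=1}^5 e_i = 0$ and fixed lengths $\|e_i\| = r_i > 0$. If the bending flow about the diagonal $e_1+e_2$ (given by $\dot e_1 = e_2\times e_1$, $\dot e_2 = e_1\times e_2$, $\dot e_i = 0$ for $i>2$) leaves the function $H_5(\mathbf{e}) = \sum_{i=1}^4 \frac{e_i\cdot e_5}{\alpha_i - \alpha_5}$ invariant for all pentagons (where $\alpha_1,\ldots,\alpha_5$ are constants with $\alpha_i \neq \alpha_5$ for $i<5$), then $\alpha_1 = \alpha_2$. -/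
open Matrix

noncomputable def Epent (t : ℝ) : Fin 5 → Fin 3 → ℝ :=
  ![![Real.cos t, Real.sin t, 1], ![-Real.cos t, -Real.sin t, 0],
    ![1, 0, 0], ![-1, -1, -1], ![0, 1, 0]]

theorem stmt18 (α : Fin 5 → ℝ) (hα : ∀ i : Fin 5, i ≠ 4 → α i ≠ α 4)
    (hinv : ∀ e : ℝ → Fin 5 → Fin 3 → ℝ,
      (∀ t, ∑ k, e t k = 0) →
      (∀ t k, e t k ≠ 0) →
      (∀ t, HasDerivAt e
        (fun k => if k = (0 : Fin 5) then crossProduct (e t 1) (e t 0)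
          else if k = (1 : Fin 5) then crossProduct (e t 0) (e t 1)
          else 0) t) →
      ∀ t, (∑ i ∈ Finset.univ.erase (4 : Fin 5), (e t i ⬝ᵥ e t 4) / (α i - α 4)) =
        ∑ i ∈ Finset.univ.erase (4 : Fin 5), (e 0 i ⬝ᵥ e 0 4) / (α i - α 4)) :
    α 0 = α 1 := by
  have hsum : ∀ t : ℝ, ∑ k, Epent t k = 0 := by
    intro t
    funext j
    simp only [Fin.sum_univ_five, Epent, Pi.add_apply, Pi.zero_apply]
    fin_cases j <;> simp <;> ring
  have hne : ∀ t k, Epent t k ≠ 0 := by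
    intro t k h
    fin_cases k
    · have := congrFun h 2; simpa [Epent] using this
    · have h0 := congrFun h 0
      have h1 := congrFun h 1
      simp [Epent] at h0 h1
      have := Real.sin_sq_add_cos_sq t
      rw [h0, h1] at this; norm_num at this
    · have := congrFun h 0; simpa [Epent] using this
    · have := congrFun h 0; simpa [Epent] using this
    · have := congrFun h 1; simpa [Epent] using this
  have hderiv : ∀ t, HasDerivAt Epent
      (fun k => if k = (0 : Fin 5) then crossProduct (Epent t 1) (Epent t 0)
          else if k = (1 : Fin 5) then crossProduct (Epent t 0) (Epent t 1)
          else 0) t := by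
    intro t
    rw [hasDerivAt_pi]
    intro k
    rw [hasDerivAt_pi]
    intro j
    fin_cases k <;> fin_cases j <;>
      simp [Epent, cross_apply] <;>
      first
        | exact ((Real.hasDerivAt_cos t).congr_deriv (by ring))
        | exact ((Real.hasDerivAt_sin t).congr_deriv (by ring))
        | exact ((Real.hasDerivAt_cos t).neg.congr_deriv (by ring))
        | exact ((Real.hasDerivAt_sin t).neg.congr_deriv (by ring))
        | exact (hasDerivAt_const t (1:ℝ)).congr_deriv (by ring)
        | exact (hasDerivAt_const t (0:ℝ)).congr_deriv (by ring)
        | exact (hasDerivAt_const t (-1:ℝ)).congr_deriv (by ring)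
  have key := hinv Epent hsum hne hderiv (Real.pi / 2)
  rw [Finset.sum_erase_eq_sub (Finset.mem_univ (4 : Fin 5)),
    Finset.sum_erase_eq_sub (Finset.mem_univ (4 : Fin 5)), Fin.sum_univ_five,
    Fin.sum_univ_five] at key
  have h0 : α 0 - α 4 ≠ 0 := sub_ne_zero.mpr (hα 0 (by decide))
  have h1 : α 1 - α 4 ≠ 0 := sub_ne_zero.mpr (hα 1 (by decide))
  simp [Epent, dotProduct, Fin.sum_univ_three, Fin.sum_univ_four,
    Real.sin_pi_div_two, Real.cos_pi_div_two] at key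
  field_simp at key
  linarith
end
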